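/- The unit interval [0,1], equipped with the standard metric, does not support a (p,q)-metric cotype inequality for any real numbers p, q with 1 ≤ p ≤ q < 2; that is, for every such p, q, every Γ ≥ 1, and every scaling function m : ℕ → 2ℕ, there exist n ∈ ℕ and f : (ℤ/m(n)ℤ)^n → [0,1] violating the (p,q)-metric cotype inequality with constant Γ. In particular q_{[0,1]} ≥ 2. -/

import Mathlib

open scoped BigOperators

noncomputable def cotypeLHS {X : Type*} [PseudoMetricSpace X] (p : ℝ) (n m : ℕ) (hm : m ≠ 0)
    (f : (Fin n → ZMod m) → X) : ℝ :=
  haveI : NeZero m := ⟨hm⟩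
  (∑ ε : Fin n → ZMod m, ∑ j : Fin n,
      dist (f ε) (f (ε + fun i => if i = j then ((m / 2 : ℕ) : ZMod m) else 0)) ^ p) / (m : ℝ) ^ n

noncomputable def cotypeRHS {X : Type*} [PseudoMetricSpace X] (p : ℝ) (n m : ℕ) (hm : m ≠ 0)
    (f : (Fin n → ZMod m) → X) : ℝ :=
  haveI : NeZero m := ⟨hm⟩
  (∑ ε : Fin n → ZMod m, ∑ δ : Fin n → Fin 3,
      dist (f ε) (f (ε + fun i => (((δ i : ℤ) - 1 : ℤ) : ZMod m))) ^ p) / ((m : ℝ) ^ n * 3 ^ n)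

/-- The `(p,q)`-metric cotype inequality with constant `Γ` for given `n` and `m`. -/
def SatisfiesCotype (X : Type*) [PseudoMetricSpace X] (p q Γ : ℝ) (n m : ℕ) (hm : m ≠ 0) : Prop :=
  ∀ f : (Fin n → ZMod m) → X,
    cotypeLHS p n m hm f ≤ Γ ^ p * (m : ℝ) ^ p * (n : ℝ) ^ (1 - p / q) * cotypeRHS p n m hm f

/-- `X` supports a `(p,q)`-metric cotype inequality. -/
def SupportsCotype (X : Type*) [PseudoMetricSpace X] (p q : ℝ) : Prop :=
  ∃ Γ : ℝ, 1 ≤ Γ ∧ ∃ m : ℕ → ℕ, ∃ h : ∀ n, Even (m n) ∧ 0 < m n,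
    ∀ n, SatisfiesCotype X p q Γ n (m n) (h n).2.ne'

namespace NoCotypeAux

variable {m : ℕ}

noncomputable def phi (m : ℕ) [NeZero m] (x : ZMod m) : ℝ :=
  (2 * min x.val (m - x.val)) / m

lemma phi_mem [NeZero m] (x : ZMod m) : phi m x ∈ Set.Icc (0:ℝ) 1 := by
  have hm : 0 < m := Nat.pos_of_ne_zero (NeZero.ne m)
  have hv : x.val < m := ZMod.val_lt x
  constructor
  · apply div_nonneg (by positivity) (by positivity)
  · unfold phi
    rw [div_le_one (by exact_mod_cast hm : (0:ℝ) < m)]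
    have : 2 * min x.val (m - x.val) ≤ m := by omega
    exact_mod_cast this

lemma abs_phi_sub_phi [NeZero m] (x y : ZMod m)
    (h : min x.val (m - x.val) ≤ min y.val (m - y.val) + 1)
    (h' : min y.val (m - y.val) ≤ min x.val (m - x.val) + 1) :
    |phi m x - phi m y| ≤ 2 / m := by
  have hm : 0 < m := Nat.pos_of_ne_zero (NeZero.ne m)
  unfold phi
  rw [div_sub_div_same, abs_div, abs_of_nonneg (by positivity : (0:ℝ) ≤ (m:ℝ))]
  gcongr
  set a := min x.val (m - x.val)
  set b := min y.val (m - y.val)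
  have h1 : (a:ℝ) ≤ b + 1 := by exact_mod_cast h
  have h2 : (b:ℝ) ≤ a + 1 := by exact_mod_cast h'
  rw [abs_le]; constructor <;> nlinarith

lemma phi_step [NeZero m] (x : ZMod m) : |phi m (x + 1) - phi m x| ≤ 2 / m := by
  have hm : 0 < m := Nat.pos_of_ne_zero (NeZero.ne m)
  rcases eq_or_lt_of_le (show 1 ≤ m from hm) with h1 | h1
  · have : x + 1 = x := by
      haveI : Subsingleton (ZMod m) := by rw [← h1]; infer_instance
      exact Subsingleton.elim _ _
    rw [this]; simp; positivity
  · haveI : Fact (1 < m) := ⟨h1⟩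
    have hv : x.val < m := ZMod.val_lt x
    have hval : (x + 1).val = (x.val + 1) % m := by
      rw [ZMod.val_add, ZMod.val_one]
    apply abs_phi_sub_phi
    · rcases Nat.lt_or_ge (x.val + 1) m with h | h
      · rw [hval, Nat.mod_eq_of_lt h]; omega
      · have : x.val + 1 = m := by omega
        rw [hval, this, Nat.mod_self]; omega
    · rcases Nat.lt_or_ge (x.val + 1) m with h | h
      · rw [hval, Nat.mod_eq_of_lt h]; omega
      · have : x.val + 1 = m := by omega
        rw [hval, this, Nat.mod_self]; omega

lemma phi_lip_nat [NeZero m] (k : ℕ) : ∀ (c : ℤ), c.natAbs ≤ k → ∀ x : ZMod m,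
    |phi m (x + (c : ZMod m)) - phi m x| ≤ 2 * k / m := by
  have hm : 0 < m := Nat.pos_of_ne_zero (NeZero.ne m)
  have hm' : (0:ℝ) < m := by exact_mod_cast hm
  induction k with
  | zero =>
    intro c hc x
    have : c = 0 := by omega
    simp [this]
  | succ k ih =>
    intro c hc x
    rcases Nat.lt_or_ge k c.natAbs with h | h
    · have hne : c ≠ 0 := by omega
      rcases lt_or_gt_of_ne hne with hneg | hpos
      · have h1 : (c + 1).natAbs ≤ k := by omega
        have key := ih (c + 1) h1 x
        have step := phi_step (x + (c : ZMod m))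
        have e : x + (c : ZMod m) + 1 = x + ((c + 1 : ℤ) : ZMod m) := by
          push_cast; ring
        rw [e] at step
        calc |phi m (x + (c : ZMod m)) - phi m x|
            ≤ |phi m (x + (c : ZMod m)) - phi m (x + ((c+1:ℤ) : ZMod m))|
              + |phi m (x + ((c+1:ℤ) : ZMod m)) - phi m x| := abs_sub_le _ _ _
          _ ≤ 2 / m + 2 * k / m := by
              rw [← abs_sub_comm]; exact add_le_add step key
          _ = 2 * (k+1) / m := by ring
          _ = 2 * ((k:ℕ)+1 : ℕ) / m := by push_cast; ring
      · have h1 : (c - 1).natAbs ≤ k := by omega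
        have key := ih (c - 1) h1 x
        have step := phi_step (x + ((c - 1 : ℤ) : ZMod m))
        have e : x + ((c - 1 : ℤ) : ZMod m) + 1 = x + (c : ZMod m) := by
          push_cast; ring
        rw [e] at step
        calc |phi m (x + (c : ZMod m)) - phi m x|
            ≤ |phi m (x + (c : ZMod m)) - phi m (x + ((c-1:ℤ) : ZMod m))|
              + |phi m (x + ((c-1:ℤ) : ZMod m)) - phi m x| := abs_sub_le _ _ _
          _ ≤ 2 / m + 2 * k / m := add_le_add step key
          _ = 2 * ((k:ℕ)+1 : ℕ) / m := by push_cast; ring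
    · calc |phi m (x + (c : ZMod m)) - phi m x| ≤ 2 * k / m := ih c h x
        _ ≤ 2 * ((k:ℕ)+1 : ℕ) / m := by
            gcongr
            push_cast; linarith

lemma phi_lip [NeZero m] (c : ℤ) (x : ZMod m) :
    |phi m (x + (c : ZMod m)) - phi m x| ≤ 2 * |(c:ℝ)| / m := by
  have := phi_lip_nat c.natAbs c le_rfl x
  rwa [show ((c.natAbs : ℕ) : ℝ) = |(c:ℝ)| by
    rw [Nat.cast_natAbs]; push_cast; ring] at this

lemma phi_half [NeZero m] (hme : 2 * (m/2) = m) (x : ZMod m) (hx : 8 * x.val ≤ m) :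
    1/2 ≤ phi m (x + ((m/2 : ℕ) : ZMod m)) - phi m x := by
  have hm : 0 < m := Nat.pos_of_ne_zero (NeZero.ne m)
  set h := m / 2 with hh
  have hv : x.val < m := ZMod.val_lt x
  have hhm : h < m := by omega
  have hvh : x.val + h < m := by omega
  have hval : (x + (h : ZMod m)).val = x.val + h := by
    rw [ZMod.val_add, ZMod.val_cast_of_lt hhm, Nat.mod_eq_of_lt hvh]
  unfold phi
  rw [hval]
  have e1 : min (x.val + h) (m - (x.val + h)) = h - x.val := by omega
  have e2 : min x.val (m - x.val) = x.val := by omega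
  rw [e1, e2, div_sub_div_same, le_div_iff₀ (by exact_mod_cast hm : (0:ℝ) < m)]
  have hcast : ((h - x.val : ℕ) : ℝ) = (h:ℝ) - x.val := by
    rw [Nat.cast_sub (by omega : x.val ≤ h)]
  rw [hcast]
  have hnat : m + 8 * x.val ≤ 4 * h := by omega
  have : (m:ℝ) + 8 * x.val ≤ 4 * h := by exact_mod_cast hnat
  linarith

lemma card_small [NeZero m] :
    (m:ℝ) / 8 ≤ ((Finset.univ.filter fun x : ZMod m => 8 * x.val ≤ m).card : ℝ) := by
  have hm : 0 < m := Nat.pos_of_ne_zero (NeZero.ne m)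
  have hsub : m / 8 + 1 ≤ (Finset.univ.filter fun x : ZMod m => 8 * x.val ≤ m).card := by
    have := Finset.card_le_card_of_injOn (f := fun a : ℕ => (a : ZMod m))
      (s := Finset.range (m / 8 + 1))
      (t := Finset.univ.filter fun x : ZMod m => 8 * x.val ≤ m) ?_ ?_
    · simpa using this
    · intro a ha
      simp only [Finset.mem_coe, Finset.mem_range] at ha
      have halt : a < m := by omega
      simp only [Finset.mem_coe, Finset.mem_filter, Finset.mem_univ, true_and]
      rw [ZMod.val_cast_of_lt halt]
      omega
    · intro a ha b hb hab
      simp only [Finset.coe_range, Set.mem_Iio] at ha hb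
      have : ((a : ZMod m)).val = ((b : ZMod m)).val := congrArg ZMod.val hab
      rwa [ZMod.val_cast_of_lt (by omega), ZMod.val_cast_of_lt (by omega)] at this
  have : (m:ℝ) / 8 ≤ (m / 8 + 1 : ℕ) := by
    have h8 : m < 8 * (m / 8 + 1) := by omega
    have : (m:ℝ) < 8 * ((m / 8 + 1 : ℕ) : ℝ) := by exact_mod_cast h8
    linarith
  calc (m:ℝ)/8 ≤ ((m/8 + 1 : ℕ) : ℝ) := this
    _ ≤ _ := by exact_mod_cast hsub

lemma sum_translate [NeZero m] (g : ZMod m → ℝ) (c : ZMod m) :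
    ∑ a : ZMod m, g (a + c) = ∑ a : ZMod m, g a :=
  Fintype.sum_equiv (Equiv.addRight c) _ _ (fun _ => rfl)

lemma sum_diag (k : ℕ) [NeZero m] (g : ZMod m → ℝ) :
    ∑ ε : Fin (k+1) → ZMod m, g (∑ i, ε i) = (m:ℝ)^k * ∑ x : ZMod m, g x := by
  rw [← Equiv.sum_comp (Fin.consEquiv fun _ => ZMod m) (fun ε => g (∑ i, ε i)),
    Fintype.sum_prod_type]
  have hsum : ∀ (a : ZMod m) (t : Fin k → ZMod m),
      (∑ i, (Fin.consEquiv fun _ => ZMod m) (a, t) i) = a + ∑ i, t i := by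
    intro a t
    rw [Fin.sum_univ_succ]
    simp [Fin.consEquiv]
  simp_rw [hsum]
  rw [Finset.sum_comm]
  have : ∀ t : Fin k → ZMod m, ∑ a : ZMod m, g (a + ∑ i, t i) = ∑ x : ZMod m, g x := by
    intro t
    exact sum_translate g _
  simp_rw [this]
  rw [Finset.sum_const, Finset.card_univ]
  simp [nsmul_eq_mul]

lemma sum_S_sq : ∀ n : ℕ, 3 * ∑ δ : Fin n → Fin 3, (∑ i, ((δ i : ℤ) - 1))^2
    = 2 * n * 3^n := by
  intro n
  induction n with
  | zero => simp
  | succ n ih =>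
    rw [← Equiv.sum_comp (Fin.consEquiv fun _ => Fin 3)
      (fun δ : Fin (n+1) → Fin 3 => (∑ i, ((δ i : ℤ) - 1))^2), Fintype.sum_prod_type]
    have hc : ∀ (a : Fin 3) (t : Fin n → Fin 3),
        (∑ i, (((Fin.consEquiv fun _ => Fin 3) (a, t) i : ℤ) - 1))
          = ((a:ℤ)-1) + ∑ i, ((t i : ℤ) - 1) := by
      intro a t
      rw [Fin.sum_univ_succ]
      simp [Fin.consEquiv]
    simp_rw [hc]
    have expand : ∀ (a : Fin 3) (t : Fin n → Fin 3),
        (((a:ℤ)-1) + ∑ i, ((t i : ℤ) - 1))^2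
          = ((a:ℤ)-1)^2 + 2*((a:ℤ)-1)*(∑ i, ((t i : ℤ) - 1)) + (∑ i, ((t i : ℤ) - 1))^2 :=
      fun a t => by ring
    simp_rw [expand, Finset.sum_add_distrib, Finset.sum_const, Finset.card_univ, ← Finset.mul_sum]
    have hcard : Fintype.card (Fin n → Fin 3) = 3^n := by simp
    rw [hcard]
    have h0 : ∑ a : Fin 3, ((a:ℤ)-1) = 0 := by decide
    have h2 : ∑ a : Fin 3, ((a:ℤ)-1)^2 = 2 := by decide
    set u := ∑ t : Fin n → Fin 3, ∑ i, ((t i : ℤ) - 1)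
    set v := ∑ t : Fin n → Fin 3, (∑ i, ((t i : ℤ) - 1))^2
    simp only [nsmul_eq_mul, Fintype.card_fin]
    rw [← Finset.mul_sum, h2,
      show (∑ x : Fin 3, 2*((x:ℤ)-1)*u) = 0 by
        rw [← Finset.sum_mul, ← Finset.mul_sum, h0]; ring]
    push_cast
    linear_combination 3 * ih

lemma moment (n : ℕ) (p : ℝ) (hp1 : 1 ≤ p) (hp2 : p ≤ 2) :
    (∑ δ : Fin n → Fin 3, |((∑ i, ((δ i : ℤ) - 1) : ℤ) : ℝ)| ^ p) / 3^n
      ≤ (n:ℝ)^(p/2) := by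
  have hp0 : 0 < p := by linarith
  have hN : (0:ℝ) < 3^n := by positivity
  set w : (Fin n → Fin 3) → ℝ := fun _ => 1 / 3^n with hw_def
  set z : (Fin n → Fin 3) → ℝ := fun δ => |((∑ i, ((δ i : ℤ) - 1) : ℤ) : ℝ)| ^ p with hz_def
  have hw : ∀ δ ∈ Finset.univ, 0 ≤ w δ := fun _ _ => by positivity
  have hw' : ∑ δ : Fin n → Fin 3, w δ = 1 := by
    rw [Finset.sum_const, Finset.card_univ]
    simp [hw_def, nsmul_eq_mul]
  have hz : ∀ δ ∈ Finset.univ, 0 ≤ z δ := fun δ _ => by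
    apply Real.rpow_nonneg (abs_nonneg _)
  have hpp : (1:ℝ) ≤ 2 / p := by
    rw [le_div_iff₀ hp0]; linarith
  have jensen := Real.arith_mean_le_rpow_mean Finset.univ w z hw hw' hz hpp
  have hz2 : ∀ δ : Fin n → Fin 3, z δ ^ (2/p) = (((∑ i, ((δ i : ℤ) - 1) : ℤ) : ℝ))^2 := by
    intro δ
    rw [hz_def]
    rw [← Real.rpow_mul (abs_nonneg _), mul_div_cancel₀ _ (ne_of_gt hp0)]
    rw [show ((2:ℝ)) = ((2:ℕ):ℝ) by norm_num, Real.rpow_natCast, sq_abs]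
  simp_rw [hz2] at jensen
  -- compute the second moment
  have hZ : (3:ℝ) * ∑ δ : Fin n → Fin 3, (((∑ i, ((δ i : ℤ) - 1) : ℤ) : ℝ))^2
      = 2 * n * 3^n := by
    have hcs : (∑ δ : Fin n → Fin 3, (((∑ i, ((δ i : ℤ) - 1) : ℤ) : ℝ))^2)
        = ((∑ δ : Fin n → Fin 3, (∑ i, ((δ i : ℤ) - 1))^2 : ℤ) : ℝ) := by
      push_cast; rfl
    rw [hcs]
    exact_mod_cast sum_S_sq n
  have hmom : ∑ δ : Fin n → Fin 3, w δ * (((∑ i, ((δ i : ℤ) - 1) : ℤ) : ℝ))^2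
      = 2 * n / 3 := by
    simp only [hw_def]
    rw [← Finset.mul_sum]
    rw [show (∑ δ : Fin n → Fin 3, (((∑ i, ((δ i : ℤ) - 1) : ℤ) : ℝ))^2) = 2*n*3^n/3 by
      linarith]
    field_simp
  rw [hmom] at jensen
  have hlhs : ∑ δ : Fin n → Fin 3, w δ * z δ
      = (∑ δ : Fin n → Fin 3, |((∑ i, ((δ i : ℤ) - 1) : ℤ) : ℝ)| ^ p) / 3^n := by
    simp only [hw_def, hz_def]
    rw [← Finset.mul_sum]
    ring
  rw [hlhs] at jensen
  refine jensen.trans ?_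
  rw [one_div_div]
  apply Real.rpow_le_rpow (by positivity) ?_ (by positivity)
  have : (0:ℝ) ≤ n := Nat.cast_nonneg n
  linarith

lemma key (p q Γ : ℝ) (hp1 : 1 ≤ p) (hpq : p ≤ q) (hq2 : q < 2) (hΓ : 1 ≤ Γ)
    (k m : ℕ) (hm0 : m ≠ 0) (hme : 2 * (m / 2) = m)
    (hsat : SatisfiesCotype (Set.Icc (0:ℝ) 1) p q Γ (k+1) m hm0) :
    ((k+1:ℕ):ℝ) / 32 ≤ Γ^p * 2^p * ((k+1:ℕ):ℝ) ^ (1 - p/q + p/2) := by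
  haveI : NeZero m := ⟨hm0⟩
  set n := k + 1 with hn
  have hp0 : (0:ℝ) < p := lt_of_lt_of_le one_pos hp1
  have hp2 : p ≤ 2 := le_trans hpq (le_of_lt hq2)
  have hmpos : 0 < m := Nat.pos_of_ne_zero hm0
  have hmR : (0:ℝ) < m := by exact_mod_cast hmpos
  have hnR : (0:ℝ) < ((n:ℕ):ℝ) := by exact_mod_cast Nat.succ_pos k
  set f : (Fin n → ZMod m) → (Set.Icc (0:ℝ) 1) :=
    fun ε => ⟨phi m (∑ i, ε i), phi_mem _⟩ with hf
  have hineq := hsat f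
  -- the shifted sums
  have hshift1 : ∀ (ε : Fin n → ZMod m) (j : Fin n),
      (∑ i, (ε + fun i => if i = j then ((m/2:ℕ) : ZMod m) else 0) i)
        = (∑ i, ε i) + ((m/2:ℕ) : ZMod m) := by
    intro ε j
    simp only [Pi.add_apply]
    rw [Finset.sum_add_distrib, Finset.sum_ite_eq' Finset.univ j
      (fun _ => ((m/2:ℕ) : ZMod m))]
    simp
  have hshift2 : ∀ (ε : Fin n → ZMod m) (δ : Fin n → Fin 3),
      (∑ i, (ε + fun i => (((δ i : ℤ) - 1 : ℤ) : ZMod m)) i)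
        = (∑ i, ε i) + (((∑ i, ((δ i : ℤ) - 1) : ℤ)) : ZMod m) := by
    intro ε δ
    simp only [Pi.add_apply]
    rw [Finset.sum_add_distrib]
    congr 1
    push_cast
    rfl
  -- LHS lower bound
  set g : ZMod m → ℝ := fun x => |phi m x - phi m (x + ((m/2:ℕ) : ZMod m))| ^ p with hg
  have hLHS1 : cotypeLHS p n m hm0 f
      = ((n:ℕ):ℝ) * ((m:ℝ)^k * ∑ x : ZMod m, g x) / (m:ℝ)^n := by
    unfold cotypeLHS
    congr 1
    have : ∀ ε : Fin n → ZMod m, ∀ j : Fin n,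
        dist (f ε) (f (ε + fun i => if i = j then ((m/2:ℕ) : ZMod m) else 0)) ^ p
          = g (∑ i, ε i) := by
      intro ε j
      rw [hf]
      simp only
      rw [Subtype.dist_eq]
      simp only
      rw [Real.dist_eq, hshift1 ε j]
    simp_rw [this]
    simp only [Finset.sum_const, Finset.card_univ, Fintype.card_fin, nsmul_eq_mul]
    rw [← Finset.mul_sum, ← sum_diag k g]
  -- lower bound on the sum
  have hquarter : (1/4:ℝ) ≤ (1/2:ℝ)^p := by
    have h2 : ((1:ℝ)/2)^(2:ℝ) = 1/4 := by
      rw [show (2:ℝ) = ((2:ℕ):ℝ) by norm_num, Real.rpow_natCast]; norm_num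
    rw [← h2]
    exact Real.rpow_le_rpow_of_exponent_ge (by norm_num) (by norm_num) hp2
  have hgsum : (m:ℝ)/8 * (1/4) ≤ ∑ x : ZMod m, g x := by
    have hsub : ∑ x ∈ (Finset.univ.filter fun x : ZMod m => 8 * x.val ≤ m), g x
        ≤ ∑ x : ZMod m, g x := by
      apply Finset.sum_le_sum_of_subset_of_nonneg (Finset.filter_subset _ _)
      intro x _ _
      exact Real.rpow_nonneg (abs_nonneg _) p
    refine le_trans ?_ hsub
    have hterm : ∀ x ∈ (Finset.univ.filter fun x : ZMod m => 8 * x.val ≤ m),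
        (1/2:ℝ)^p ≤ g x := by
      intro x hx
      simp only [Finset.mem_filter, Finset.mem_univ, true_and] at hx
      have hd := phi_half hme x hx
      have habs : (1/2:ℝ) ≤ |phi m x - phi m (x + ((m/2:ℕ) : ZMod m))| := by
        rw [abs_sub_comm]
        exact le_trans hd (le_abs_self _)
      exact Real.rpow_le_rpow (by norm_num) habs (le_of_lt hp0)
    calc (m:ℝ)/8 * (1/4) ≤ (((Finset.univ.filter fun x : ZMod m => 8 * x.val ≤ m).card : ℝ)) * ((1/2:ℝ)^p) := by
          apply mul_le_mul card_small hquarter (by norm_num) (Nat.cast_nonneg _)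
      _ = ∑ x ∈ (Finset.univ.filter fun x : ZMod m => 8 * x.val ≤ m), (1/2:ℝ)^p := by
          rw [Finset.sum_const, nsmul_eq_mul]
      _ ≤ ∑ x ∈ (Finset.univ.filter fun x : ZMod m => 8 * x.val ≤ m), g x :=
          Finset.sum_le_sum hterm
  have hLHSlow : ((n:ℕ):ℝ)/32 ≤ cotypeLHS p n m hm0 f := by
    rw [hLHS1, div_le_div_iff₀ (by norm_num) (by positivity)]
    have h1 : (n:ℝ) * ((m:ℝ)^k * ((m:ℝ)/8*(1/4))) ≤ (n:ℝ) * ((m:ℝ)^k * ∑ x : ZMod m, g x) := by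
      gcongr
    calc ((n:ℕ):ℝ) * (m:ℝ)^n = ((n:ℝ) * ((m:ℝ)^k * ((m:ℝ)/8*(1/4)))) * 32 := by
          rw [show ((m:ℝ))^n = (m:ℝ)^k*(m:ℝ) from pow_succ _ _]; ring
      _ ≤ _ := by nlinarith [h1]
  -- RHS upper bound
  have hcardfun : ((Finset.univ : Finset (Fin n → ZMod m)).card : ℝ) = (m:ℝ)^n := by
    rw [Finset.card_univ]
    have : Fintype.card (Fin n → ZMod m) = m^n := by simp [ZMod.card]
    rw [this]; push_cast; ring
  have hRHS : cotypeRHS p n m hm0 f ≤ (2/(m:ℝ))^p * ((n:ℕ):ℝ)^(p/2) := by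
    unfold cotypeRHS
    have hterm : ∀ (ε : Fin n → ZMod m) (δ : Fin n → Fin 3),
        dist (f ε) (f (ε + fun i => (((δ i : ℤ) - 1 : ℤ) : ZMod m))) ^ p
          ≤ (2/(m:ℝ))^p * |((∑ i, ((δ i : ℤ) - 1) : ℤ) : ℝ)| ^ p := by
      intro ε δ
      rw [hf]
      simp only
      rw [Subtype.dist_eq]
      simp only [Real.dist_eq, hshift2 ε δ]
      have hl : |phi m (∑ i, ε i) - phi m ((∑ i, ε i) + (((∑ i, ((δ i : ℤ) - 1) : ℤ)) : ZMod m))|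
          ≤ 2 * |((∑ i, ((δ i : ℤ) - 1) : ℤ) : ℝ)| / m := by
        rw [abs_sub_comm]
        exact phi_lip _ _
      calc |phi m (∑ i, ε i) - phi m ((∑ i, ε i) + (((∑ i, ((δ i : ℤ) - 1) : ℤ)) : ZMod m))| ^ p
          ≤ (2 * |((∑ i, ((δ i : ℤ) - 1) : ℤ) : ℝ)| / m) ^ p :=
            Real.rpow_le_rpow (abs_nonneg _) hl (le_of_lt hp0)
        _ = (2/(m:ℝ))^p * |((∑ i, ((δ i : ℤ) - 1) : ℤ) : ℝ)| ^ p := by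
            rw [show 2 * |((∑ i, ((δ i : ℤ) - 1) : ℤ) : ℝ)| / m
                = (2/(m:ℝ)) * |((∑ i, ((δ i : ℤ) - 1) : ℤ) : ℝ)| by ring,
              Real.mul_rpow (by positivity) (abs_nonneg _)]
    have hsum : (∑ ε : Fin n → ZMod m, ∑ δ : Fin n → Fin 3,
          dist (f ε) (f (ε + fun i => (((δ i : ℤ) - 1 : ℤ) : ZMod m))) ^ p)
        ≤ (m:ℝ)^n * ((2/(m:ℝ))^p * ∑ δ : Fin n → Fin 3, |((∑ i, ((δ i : ℤ) - 1) : ℤ) : ℝ)| ^ p) := by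
      calc (∑ ε : Fin n → ZMod m, ∑ δ : Fin n → Fin 3,
            dist (f ε) (f (ε + fun i => (((δ i : ℤ) - 1 : ℤ) : ZMod m))) ^ p)
          ≤ ∑ _ε : Fin n → ZMod m, ∑ δ : Fin n → Fin 3,
              (2/(m:ℝ))^p * |((∑ i, ((δ i : ℤ) - 1) : ℤ) : ℝ)| ^ p := by
            apply Finset.sum_le_sum
            intro ε _
            exact Finset.sum_le_sum fun δ _ => hterm ε δ
        _ = (m:ℝ)^n * ((2/(m:ℝ))^p * ∑ δ : Fin n → Fin 3,
              |((∑ i, ((δ i : ℤ) - 1) : ℤ) : ℝ)| ^ p) := by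
            rw [Finset.sum_const, nsmul_eq_mul, hcardfun, ← Finset.mul_sum]
    have h3n : (0:ℝ) < (3:ℝ)^n := by positivity
    calc (∑ ε : Fin n → ZMod m, ∑ δ : Fin n → Fin 3,
          dist (f ε) (f (ε + fun i => (((δ i : ℤ) - 1 : ℤ) : ZMod m))) ^ p) / ((m:ℝ)^n * 3^n)
        ≤ ((m:ℝ)^n * ((2/(m:ℝ))^p * ∑ δ : Fin n → Fin 3,
            |((∑ i, ((δ i : ℤ) - 1) : ℤ) : ℝ)| ^ p)) / ((m:ℝ)^n * 3^n) := by
          apply div_le_div_of_nonneg_right hsum (by positivity)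
      _ = (2/(m:ℝ))^p * ((∑ δ : Fin n → Fin 3, |((∑ i, ((δ i : ℤ) - 1) : ℤ) : ℝ)| ^ p) / 3^n) := by
          field_simp
      _ ≤ (2/(m:ℝ))^p * ((n:ℕ):ℝ)^(p/2) := by
          apply mul_le_mul_of_nonneg_left (moment n p hp1 hp2) (by positivity)
  -- combine
  have hfinal : Γ^p * (m:ℝ)^p * ((n:ℕ):ℝ)^(1-p/q) * cotypeRHS p n m hm0 f
      ≤ Γ^p * 2^p * ((n:ℕ):ℝ)^(1-p/q+p/2) := by
    have h2 : Γ^p * (m:ℝ)^p * ((n:ℕ):ℝ)^(1-p/q) * ((2/(m:ℝ))^p * ((n:ℕ):ℝ)^(p/2))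
        = Γ^p * 2^p * ((n:ℕ):ℝ)^(1-p/q+p/2) := by
      rw [show Γ^p * (m:ℝ)^p * ((n:ℕ):ℝ)^(1-p/q) * ((2/(m:ℝ))^p * ((n:ℕ):ℝ)^(p/2))
          = Γ^p * ((m:ℝ)^p * (2/(m:ℝ))^p) * (((n:ℕ):ℝ)^(1-p/q) * ((n:ℕ):ℝ)^(p/2)) from by ring,
        ← Real.mul_rpow hmR.le (by positivity), ← Real.rpow_add hnR,
        show (m:ℝ) * (2/(m:ℝ)) = 2 from by field_simp]
    calc Γ^p * (m:ℝ)^p * ((n:ℕ):ℝ)^(1-p/q) * cotypeRHS p n m hm0 f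
        ≤ Γ^p * (m:ℝ)^p * ((n:ℕ):ℝ)^(1-p/q) * ((2/(m:ℝ))^p * ((n:ℕ):ℝ)^(p/2)) := by
          apply mul_le_mul_of_nonneg_left hRHS (by positivity)
      _ = _ := h2
  exact le_trans hLHSlow (le_trans hineq hfinal)

lemma part1 (p q : ℝ) (hp1 : 1 ≤ p) (hpq : p ≤ q) (hq2 : q < 2) :
    ¬ SupportsCotype (Set.Icc (0:ℝ) 1) p q := by
  rintro ⟨Γ, hΓ, mf, hmf, hsat⟩
  have hp0 : (0:ℝ) < p := by linarith
  have hq0 : (0:ℝ) < q := by linarith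
  set α := p/q - p/2 with hα_def
  have hα : 0 < α := by
    have : α = p*(2-q)/(2*q) := by rw [hα_def]; field_simp
    rw [this]
    have h2q : 0 < 2 - q := by linarith
    positivity
  have hΓ0 : (0:ℝ) < Γ := by linarith
  set C := 32 * (Γ^p * 2^p) with hC_def
  have hC0 : 0 < C := by positivity
  obtain ⟨N, hN⟩ := exists_nat_gt (C ^ (1/α))
  set n := N + 1 with hn_def
  have hme : 2 * (mf n / 2) = mf n := by
    obtain ⟨r, hr⟩ := (hmf n).1
    omega
  have hkey := key p q Γ hp1 hpq hq2 hΓ N (mf n) (hmf n).2.ne' hme (hsat n)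
  have hn1 : (1:ℝ) ≤ ((n:ℕ):ℝ) := by exact_mod_cast Nat.succ_le_succ (Nat.zero_le N)
  have hnpos : (0:ℝ) < ((n:ℕ):ℝ) := by linarith
  have hgt : C < ((n:ℕ):ℝ) ^ α := by
    have h1 : C ^ (1/α) < ((n:ℕ):ℝ) := by
      refine lt_of_lt_of_le hN ?_
      push_cast [hn_def]
      linarith
    calc C = (C ^ (1/α)) ^ α := by
          rw [← Real.rpow_mul hC0.le, one_div_mul_cancel hα.ne', Real.rpow_one]
      _ < ((n:ℕ):ℝ) ^ α := Real.rpow_lt_rpow (Real.rpow_nonneg hC0.le _) h1 hα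
  have hsplit : ((n:ℕ):ℝ) = ((n:ℕ):ℝ)^α * ((n:ℕ):ℝ)^(1 - p/q + p/2) := by
    rw [← Real.rpow_add hnpos, show α + (1 - p/q + p/2) = 1 from by rw [hα_def]; ring,
      Real.rpow_one]
  have hpowpos : (0:ℝ) < ((n:ℕ):ℝ)^(1 - p/q + p/2) := Real.rpow_pos_of_pos hnpos _
  have hub : ((n:ℕ):ℝ)^α ≤ C := by
    have h32 : ((n:ℕ):ℝ)^α * ((n:ℕ):ℝ)^(1 - p/q + p/2)
        ≤ C * ((n:ℕ):ℝ)^(1 - p/q + p/2) := by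
      calc ((n:ℕ):ℝ)^α * ((n:ℕ):ℝ)^(1 - p/q + p/2) = ((n:ℕ):ℝ) := hsplit.symm
        _ ≤ 32 * (Γ ^ p * 2 ^ p * ((n:ℕ):ℝ)^(1 - p/q + p/2)) := by linarith [hkey]
        _ = C * ((n:ℕ):ℝ)^(1 - p/q + p/2) := by rw [hC_def]; ring
    exact le_of_mul_le_mul_right h32 hpowpos
  linarith

end NoCotypeAux

/-- **The unit interval `[0,1]` supports no `(p,q)`-metric cotype inequality with
`1 ≤ p ≤ q < 2`; in particular `q_{[0,1]} ≥ 2`.** -/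
theorem unitInterval_no_cotype_lt_two :
    (∀ p q : ℝ, 1 ≤ p → p ≤ q → q < 2 →
      ¬ SupportsCotype (Set.Icc (0 : ℝ) 1) p q) ∧
    (∀ q : ℝ, 1 ≤ q → (∃ p : ℝ, 1 ≤ p ∧ p ≤ q ∧ SupportsCotype (Set.Icc (0 : ℝ) 1) p q) →
      2 ≤ q) := by
  constructor
  · exact fun p q hp hpq hq2 => NoCotypeAux.part1 p q hp hpq hq2
  · rintro q _ ⟨p, hp1, hpq, hsupp⟩
    by_contra h
    exact NoCotypeAux.part1 p q hp1 hpq (lt_of_not_ge h) hsupp
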